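/- Let Y be an integral projective variety over K and R a globally generated line bundle on Y with h^1(Y, R) = 0. Set X := Y × ℙ^1 with projections π_1 : X → Y and π_2 : X → ℙ^1, and for t ∈ ℤ set R⊠(t) := π_1^*(R) ⊗ π_2^*(O_{ℙ^1}(t)). Let Z ⊂ X be a zero-dimensional closed subscheme such that h^1(X, I_Z ⊗ R⊠(z)) = 0 for some z ∈ ℕ, and let e be the minimal such natural number. For t ≥ 0, let μ_t : H^0(π_2^*(O_{ℙ^1}(1))) ⊗ H^0(I_Z ⊗ R⊠(t)) → H^0(I_Z ⊗ R⊠(t+1)) be the multiplication map. Then dim coker(μ_e) = h^1(X, I_Z ⊗ R⊠(e−1)); in particular, if e = 0 then dim coker(μ_0) = deg(Z). -/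

import Mathlib

open Module MvPolynomial
open scoped TensorProduct

namespace MultiProjPaper

/-- `H^0(ℙ^m, O_{ℙ^m}(t))`: the space of degree-`t` homogeneous polynomials in
`K[x_0, …, x_m]` (as a type, to keep typeclass inference manageable). -/
def PmT (K : Type) [Field K] (m t : ℕ) : Type :=
  ↥(homogeneousSubmodule (Fin (m + 1)) K t)

noncomputable instance (K : Type) [Field K] (m t : ℕ) : AddCommGroup (PmT K m t) :=
  inferInstanceAs (AddCommGroup ↥(homogeneousSubmodule (Fin (m + 1)) K t))

noncomputable instance (K : Type) [Field K] (m t : ℕ) : Module K (PmT K m t) :=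
  inferInstanceAs (Module K ↥(homogeneousSubmodule (Fin (m + 1)) K t))

/-- The homogeneous polynomial underlying an element of `H^0(ℙ^m, O(t))`. -/
def PmT.poly {K : Type} [Field K] {m t : ℕ} (g : PmT K m t) :
    MvPolynomial (Fin (m + 1)) K := g.1

lemma PmT.isHomogeneous {K : Type} [Field K] {m t : ℕ} (g : PmT K m t) :
    (PmT.poly g).IsHomogeneous t := g.2

lemma PmT.poly_add {K : Type} [Field K] {m t : ℕ} (g g' : PmT K m t) :
    (g + g').poly = g.poly + g'.poly := rfl

lemma PmT.poly_smul {K : Type} [Field K] {m t : ℕ} (c : K) (g : PmT K m t) :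
    (c • g).poly = c • g.poly := rfl

/-- Model of a zero-dimensional closed subscheme `Z` of `M = Y × ℙ^m`, where `Y` is an
integral projective variety over `K` and `R` is a globally generated line bundle on `Y`
with `h^1(Y, R) = 0` and with space of global sections `V = H^0(Y, R)`.

`Z` is encoded by its (finite-dimensional, commutative) algebra of global functions
`A = H^0(Z, O_Z)` (so `deg Z = dim_K A`), together with:
* `ρ : V → A`, the restriction map `H^0(Y, R) → H^0(Z, R|_Z) ≅ A` (after a trivialization
  of the line bundle `R` on the zero-dimensional scheme `Z`);
* `ξ : Fin (m+1) → A`, the restrictions to `Z` of the homogeneous coordinates of `ℙ^m`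
  (after a trivialization of `O(1)|_Z`).

The field `spanξ` records that the homogeneous coordinates of `ℙ^m` have no common zero
(hence generate the unit ideal on the finite scheme `Z`); the field `spanρ` is the model
counterpart of the hypothesis that `R` is globally generated (its global sections have no
common zero on `Y`, hence generate the unit ideal on `Z`).

By the Künneth formula and the hypothesis `h^1(Y, R) = 0`, for `t ∈ ℕ` one has
`H^0(M, R ⊠ (t)) = H^0(Y, R) ⊗ K[x_0, …, x_m]_t`, the space `H^0(M, 𝓘_Z ⊗ R ⊠ (t))` is
the kernel of the evaluation ("restriction to `Z`") map
`H^0(Y, R) ⊗ K[x_0, …, x_m]_t → A`, `σ ⊗ g ↦ ρ(σ)·g(ξ)`, and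
`h^1(M, 𝓘_Z ⊗ R ⊠ (t)) = dim_K A - rank(evaluation map)`. -/
structure ZeroDimInProd (K : Type) [Field K]
    (V : Type) [AddCommGroup V] [Module K V] (m : ℕ) where
  A : Type
  [instCommRing : CommRing A]
  [instAlgebra : Algebra K A]
  [instFinite : Module.Finite K A]
  ρ : V →ₗ[K] A
  ξ : Fin (m + 1) → A
  spanξ : Ideal.span (Set.range ξ) = ⊤
  spanρ : Ideal.span (Set.range ⇑ρ) = ⊤

attribute [instance] ZeroDimInProd.instCommRing ZeroDimInProd.instAlgebra
  ZeroDimInProd.instFinite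

variable {K : Type} [Field K] {V : Type} [AddCommGroup V] [Module K V] {m : ℕ}

/-- The evaluation (restriction to `Z`) map `H^0(Y,R) × K[x]_t → H^0(Z, O_Z)` as a
bilinear map: `(σ, g) ↦ ρ(σ) · g(ξ)`. -/
noncomputable def evBil (Z : ZeroDimInProd K V m) (t : ℕ) :
    V →ₗ[K] PmT K m t →ₗ[K] Z.A :=
  LinearMap.mk₂ K
    (fun v g => Z.ρ v * (aeval Z.ξ) (PmT.poly g))
    (fun v v' g => by simp [add_mul])
    (fun c v g => by simp [smul_mul_assoc])
    (fun v g g' => by simp [PmT.poly_add, mul_add])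
    (fun c v g => by simp [PmT.poly_smul, mul_smul_comm])

/-- The restriction map `H^0(M, R ⊠ (t)) = H^0(Y,R) ⊗ K[x]_t → H^0(Z, O_Z)`. -/
noncomputable def evMap (Z : ZeroDimInProd K V m) (t : ℕ) :
    (V ⊗[K] PmT K m t) →ₗ[K] Z.A :=
  TensorProduct.lift (evBil Z t)

/-- `H^0(M, 𝓘_Z ⊗ R ⊠ (t))` (for `t ∈ ℕ`). -/
def H0IZ (Z : ZeroDimInProd K V m) (t : ℕ) : Type :=
  ↥(LinearMap.ker (evMap Z t))

noncomputable instance (Z : ZeroDimInProd K V m) (t : ℕ) : AddCommGroup (H0IZ Z t) :=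
  inferInstanceAs (AddCommGroup ↥(LinearMap.ker (evMap Z t)))

noncomputable instance (Z : ZeroDimInProd K V m) (t : ℕ) : Module K (H0IZ Z t) :=
  inferInstanceAs (Module K ↥(LinearMap.ker (evMap Z t)))

/-- `h^0(M, 𝓘_Z ⊗ R ⊠ (t))` (for `t ∈ ℕ`). -/
noncomputable def h0ZP (Z : ZeroDimInProd K V m) (t : ℕ) : ℕ :=
  finrank K (H0IZ Z t)

/-- `h^1(M, 𝓘_Z ⊗ R ⊠ (t))` (for `t ∈ ℕ`): `deg Z` minus the rank of the restriction
map `H^0(M, R ⊠ (t)) → H^0(Z, O_Z)`. -/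
noncomputable def h1ZP (Z : ZeroDimInProd K V m) (t : ℕ) : ℕ :=
  finrank K Z.A - finrank K ↥(LinearMap.range (evMap Z t))

end MultiProjPaper

namespace MultiProjPaper

variable {K : Type} [Field K] {V : Type} [AddCommGroup V] [Module K V]

/-- Multiplication of homogeneous polynomials on `ℙ^m`,
`H^0(O(1)) × H^0(O(t)) → H^0(O(t+1))`, as a bilinear map. -/
noncomputable def polyMulBil (K : Type) [Field K] (m t : ℕ) :
    PmT K m 1 →ₗ[K] PmT K m t →ₗ[K] PmT K m (t + 1) :=
  LinearMap.mk₂ K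
    (fun g h => (⟨PmT.poly g * PmT.poly h, by
      rw [mem_homogeneousSubmodule]
      have := g.isHomogeneous.mul h.isHomogeneous
      simpa only [Nat.add_comm 1 t] using this⟩ : PmT K m (t + 1)))
    (fun g g' h => Subtype.ext (by simp [PmT.poly_add, add_mul]; rfl))
    (fun c g h => Subtype.ext (by simp [PmT.poly_smul, smul_mul_assoc]; rfl))
    (fun g h h' => Subtype.ext (by simp [PmT.poly_add, mul_add]; rfl))
    (fun c g h => Subtype.ext (by simp [PmT.poly_smul, mul_smul_comm]; rfl))

lemma evMap_mul (Z : ZeroDimInProd K V 1) (t : ℕ) (g : PmT K 1 1) :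
    (evMap Z (t + 1)).comp (LinearMap.lTensor V ((polyMulBil K 1 t) g)) =
    (LinearMap.mulLeft K ((aeval Z.ξ) (PmT.poly g))).comp (evMap Z t) := by
  apply TensorProduct.ext'
  intro v h
  have hm : PmT.poly ((polyMulBil K 1 t) g h) = PmT.poly g * PmT.poly h := rfl
  simp [evMap, evBil, hm]
  ring

/-- The multiplication map
`μ_t : H^0(π_2^*(O_{ℙ^1}(1))) ⊗ H^0(𝓘_Z ⊗ R ⊠ (t)) → H^0(𝓘_Z ⊗ R ⊠ (t+1))`,
`σ ⊗ τ ↦ σ·τ`. -/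
noncomputable def muMap (Z : ZeroDimInProd K V 1) (t : ℕ) :
    (PmT K 1 1 ⊗[K] H0IZ Z t) →ₗ[K] H0IZ Z (t + 1) :=
  LinearMap.codRestrict (LinearMap.ker (evMap Z (t + 1)))
    (TensorProduct.lift (LinearMap.mk₂ K
      (fun (g : PmT K 1 1) (x : H0IZ Z t) =>
        LinearMap.lTensor V ((polyMulBil K 1 t) g) x.1)
      (fun g g' x => by
        show LinearMap.lTensor V ((polyMulBil K 1 t) (g + g')) x.1 = _
        rw [map_add, LinearMap.lTensor_add, LinearMap.add_apply])
      (fun c g x => by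
        show LinearMap.lTensor V ((polyMulBil K 1 t) (c • g)) x.1 = _
        rw [map_smul, LinearMap.lTensor_smul, LinearMap.smul_apply])
      (fun g x x' => by
        show LinearMap.lTensor V ((polyMulBil K 1 t) g) (x.1 + x'.1) = _
        rw [map_add])
      (fun c g x => by
        show LinearMap.lTensor V ((polyMulBil K 1 t) g) (c • x.1) = _
        rw [map_smul])))
    (by
      intro x
      induction x using TensorProduct.induction_on with
      | zero => simp
      | tmul g y =>
          rw [TensorProduct.lift.tmul, LinearMap.mk₂_apply, LinearMap.mem_ker]
          have h1 := LinearMap.congr_fun (evMap_mul Z t g) y.1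
          simp only [LinearMap.comp_apply, LinearMap.mulLeft_apply] at h1
          rw [h1, LinearMap.mem_ker.mp y.2, mul_zero]
      | add x y hx hy => rw [map_add]; exact add_mem hx hy)

end MultiProjPaper

namespace MultiProjPaper

variable {K : Type} [Field K] {V : Type} [AddCommGroup V] [Module K V]

/-! ### Monomial coordinates on `PmT K 1 t` -/

lemma fin2_eq_single_add_single (d : Fin 2 →₀ ℕ) :
    d = Finsupp.single 0 (d 0) + Finsupp.single 1 (d 1) := by
  ext i
  fin_cases i <;> simp [Finsupp.single_apply]

lemma degree_fin2 (d : Fin 2 →₀ ℕ) : d.degree = d 0 + d 1 := by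
  rw [show d.degree = ∑ i ∈ d.support, d i from rfl, Finset.sum_subset (Finset.subset_univ d.support)
    (fun x _ hx => Finsupp.notMem_support_iff.mp hx), Fin.sum_univ_two]

noncomputable def dexp (t : ℕ) (i : Fin (t + 1)) : Fin 2 →₀ ℕ :=
  Finsupp.single 0 i.1 + Finsupp.single 1 (t - i.1)

lemma dexp_apply0 (t : ℕ) (i : Fin (t + 1)) : dexp t i 0 = i.1 := by
  simp [dexp, Finsupp.single_apply]

lemma dexp_apply1 (t : ℕ) (i : Fin (t + 1)) : dexp t i 1 = t - i.1 := by
  simp [dexp, Finsupp.single_apply]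

lemma dexp_degree (t : ℕ) (i : Fin (t + 1)) : (dexp t i).degree = t := by
  have := i.isLt
  rw [degree_fin2, dexp_apply0, dexp_apply1]
  omega

lemma dexp_injective (t : ℕ) : Function.Injective (dexp t) := by
  intro i j h
  have h0 : dexp t i 0 = dexp t j 0 := by rw [h]
  rw [dexp_apply0, dexp_apply0] at h0
  exact Fin.ext h0

variable (K)

noncomputable def mon (t : ℕ) (i : Fin (t + 1)) : PmT K 1 t :=
  ⟨monomial (dexp t i) 1, isHomogeneous_monomial 1 (dexp_degree t i)⟩

lemma mon_poly (t : ℕ) (i : Fin (t + 1)) :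
    (mon K t i).poly = monomial (dexp t i) (1 : K) := rfl

noncomputable def monCoord (t : ℕ) : PmT K 1 t →ₗ[K] (Fin (t + 1) → K) where
  toFun g i := coeff (dexp t i) g.poly
  map_add' g g' := by funext i; simp [PmT.poly_add]
  map_smul' c g := by funext i; simp [PmT.poly_smul]

lemma monCoord_apply (t : ℕ) (g : PmT K 1 t) (i : Fin (t + 1)) :
    monCoord K t g i = coeff (dexp t i) g.poly := rfl

lemma monCoord_mon (t : ℕ) (i j : Fin (t + 1)) :
    monCoord K t (mon K t i) j = if i = j then 1 else 0 := by
  rw [monCoord_apply, mon_poly, coeff_monomial]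
  simp [(dexp_injective t).eq_iff]

noncomputable def monComb (t : ℕ) : (Fin (t + 1) → K) →ₗ[K] PmT K 1 t :=
  ∑ i, (LinearMap.proj i).smulRight (mon K t i)

lemma monComb_apply (t : ℕ) (c : Fin (t + 1) → K) :
    monComb K t c = ∑ i, c i • mon K t i := by
  simp [monComb, LinearMap.sum_apply]

lemma PmT.poly_sum {m t : ℕ} {ι : Type} (s : Finset ι) (f : ι → PmT K m t) :
    (∑ i ∈ s, f i).poly = ∑ i ∈ s, (f i).poly :=
  map_sum (Submodule.subtype _) f s

lemma monCoord_monComb (t : ℕ) (c : Fin (t + 1) → K) :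
    monCoord K t (monComb K t c) = c := by
  funext j
  rw [monCoord_apply, monComb_apply, PmT.poly_sum, coeff_sum]
  simp only [PmT.poly_smul, mon_poly, coeff_smul, coeff_monomial, smul_eq_mul]
  rw [Finset.sum_eq_single j]
  · rw [if_pos rfl, mul_one]
  · intro i _ hi
    rw [if_neg (fun h => hi (dexp_injective t h)), mul_zero]
  · intro h; exact absurd (Finset.mem_univ _) h

lemma monComb_monCoord (t : ℕ) (g : PmT K 1 t) :
    monComb K t (monCoord K t g) = g := by
  apply Subtype.ext
  show (monComb K t (monCoord K t g)).poly = g.poly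
  rw [monComb_apply, PmT.poly_sum]
  apply MvPolynomial.ext
  intro m
  rw [coeff_sum]
  simp only [PmT.poly_smul, mon_poly, coeff_smul, coeff_monomial, smul_eq_mul,
    monCoord_apply]
  by_cases hm : Finsupp.degree m = t
  · have h0 : m 0 < t + 1 := by
      have := Finsupp.le_degree (0 : Fin 2) m
      omega
    have hmj : m = dexp t (⟨m 0, h0⟩ : Fin (t + 1)) := by
      rw [degree_fin2] at hm
      conv_lhs => rw [fin2_eq_single_add_single m]
      have h1 : m 1 = t - m 0 := by omega
      rw [h1]
      rfl
    rw [hmj, Finset.sum_eq_single (⟨m 0, h0⟩ : Fin (t + 1))]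
    · rw [if_pos rfl, mul_one]
    · intro i _ hi
      rw [if_neg (fun h => hi (dexp_injective t h)), mul_zero]
    · intro h; exact absurd (Finset.mem_univ _) h
  · rw [g.isHomogeneous.coeff_eq_zero hm]
    refine Finset.sum_eq_zero fun i _ => ?_
    rw [if_neg, mul_zero]
    intro h
    rw [← h, dexp_degree] at hm
    exact hm rfl

noncomputable def monEquiv (t : ℕ) : PmT K 1 t ≃ₗ[K] (Fin (t + 1) → K) :=
  LinearEquiv.ofLinear (monCoord K t) (monComb K t)
    (LinearMap.ext fun c => monCoord_monComb K t c)
    (LinearMap.ext fun g => monComb_monCoord K t g)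

noncomputable instance (t : ℕ) : FiniteDimensional K (PmT K 1 t) :=
  Module.Finite.equiv (monEquiv K t).symm

lemma finrank_PmT (t : ℕ) : finrank K (PmT K 1 t) = t + 1 := by
  rw [(monEquiv K t).finrank_eq, Module.finrank_fin_fun]

lemma monEquiv_symm_apply (t : ℕ) (c : Fin (t + 1) → K) :
    (monEquiv K t).symm c = monComb K t c := rfl

lemma monComb_single (t : ℕ) (i : Fin (t + 1)) :
    monComb K t (Pi.single i (1 : K)) = mon K t i := by
  rw [monComb_apply]
  simp [Pi.single_apply, ite_smul]

/-! ### The two coordinates of `ℙ^1` and multiplication by them -/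

noncomputable def XP : PmT K 1 1 := mon K 1 1
noncomputable def YP : PmT K 1 1 := mon K 1 0

lemma polyMulBil_poly (m t : ℕ) (g : PmT K m 1) (h : PmT K m t) :
    (polyMulBil K m t g h).poly = g.poly * h.poly := rfl

lemma dexp_add_X (t : ℕ) (i : Fin (t + 1)) :
    dexp 1 1 + dexp t i = dexp (t + 1) i.succ := by
  have := i.isLt
  ext j
  fin_cases j <;> simp [dexp, Finsupp.single_apply] <;> omega

lemma dexp_add_Y (t : ℕ) (i : Fin (t + 1)) :
    dexp 1 0 + dexp t i = dexp (t + 1) i.castSucc := by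
  have := i.isLt
  ext j
  fin_cases j <;> simp [dexp, Finsupp.single_apply] <;> omega

lemma XP_mul_mon (t : ℕ) (i : Fin (t + 1)) :
    polyMulBil K 1 t (XP K) (mon K t i) = mon K (t + 1) i.succ := by
  apply Subtype.ext
  show (polyMulBil K 1 t (XP K) (mon K t i)).poly = (mon K (t + 1) i.succ).poly
  rw [polyMulBil_poly, mon_poly, mon_poly,
    show (XP K).poly = monomial (dexp 1 1) (1:K) from rfl, monomial_mul, one_mul, dexp_add_X]

lemma YP_mul_mon (t : ℕ) (i : Fin (t + 1)) :
    polyMulBil K 1 t (YP K) (mon K t i) = mon K (t + 1) i.castSucc := by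
  apply Subtype.ext
  show (polyMulBil K 1 t (YP K) (mon K t i)).poly = (mon K (t + 1) i.castSucc).poly
  rw [polyMulBil_poly, mon_poly, mon_poly,
    show (YP K).poly = monomial (dexp 1 0) (1:K) from rfl, monomial_mul, one_mul, dexp_add_Y]

variable (V)

noncomputable def Xmul (t : ℕ) :
    V ⊗[K] PmT K 1 t →ₗ[K] V ⊗[K] PmT K 1 (t + 1) :=
  LinearMap.lTensor V (polyMulBil K 1 t (XP K))

noncomputable def Ymul (t : ℕ) :
    V ⊗[K] PmT K 1 t →ₗ[K] V ⊗[K] PmT K 1 (t + 1) :=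
  LinearMap.lTensor V (polyMulBil K 1 t (YP K))

/-! ### Coordinates on `V ⊗ PmT K 1 t` -/

noncomputable def eps (t : ℕ) : (Fin (t + 1) → V) ≃ₗ[K] V ⊗[K] PmT K 1 t :=
  (TensorProduct.piScalarRight K K V (Fin (t + 1))).symm ≪≫ₗ
    TensorProduct.congr (LinearEquiv.refl K V) (monEquiv K t).symm

lemma eps_single (t : ℕ) (i : Fin (t + 1)) (x : V) :
    eps K V t (Pi.single i x) = x ⊗ₜ mon K t i := by
  rw [eps]
  simp only [LinearEquiv.trans_apply, TensorProduct.piScalarRight_symm_single,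
    TensorProduct.congr_tmul, LinearEquiv.refl_apply, monEquiv_symm_apply, monComb_single]

lemma eps_apply (t : ℕ) (v : Fin (t + 1) → V) :
    eps K V t v = ∑ i, v i ⊗ₜ mon K t i := by
  conv_lhs => rw [← Finset.univ_sum_single v, map_sum]
  exact Finset.sum_congr rfl fun i _ => eps_single K V t i (v i)

lemma Xmul_eps (t : ℕ) (v : Fin (t + 1) → V) :
    Xmul K V t (eps K V t v) = eps K V (t + 1) (Fin.cons 0 v) := by
  rw [eps_apply, map_sum, eps_apply]
  conv_rhs => rw [Fin.sum_univ_succ]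
  simp only [Xmul, LinearMap.lTensor_tmul, XP_mul_mon, Fin.cons_zero, Fin.cons_succ,
    TensorProduct.zero_tmul, zero_add]

lemma Ymul_eps (t : ℕ) (v : Fin (t + 1) → V) :
    Ymul K V t (eps K V t v) = eps K V (t + 1) (Fin.snoc v 0) := by
  rw [eps_apply, map_sum, eps_apply]
  conv_rhs => rw [Fin.sum_univ_castSucc]
  simp only [Ymul, LinearMap.lTensor_tmul, YP_mul_mon, Fin.snoc_castSucc, Fin.snoc_last,
    TensorProduct.zero_tmul, add_zero]

/-! ### The Koszul relation on `ℙ^1` -/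

lemma koszul_coord {n : ℕ} (a b : Fin (n + 1) → V)
    (h : (Fin.cons (0 : V) a : Fin (n + 1 + 1) → V) + (Fin.snoc b (0 : V) : Fin (n + 1 + 1) → V) = 0) :
    ∃ w : Fin n → V, a = Fin.snoc w 0 ∧ b = -Fin.cons 0 w := by
  have h' : ∀ j, (Fin.cons (0 : V) a : Fin (n + 1 + 1) → V) j + (Fin.snoc b (0 : V) : Fin (n + 1 + 1) → V) j = 0 := fun j => congrFun h j
  have hmix : ∀ i : Fin n, a i.castSucc + b i.succ = 0 := by
    intro i
    have := h' (i.castSucc.succ)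
    rwa [Fin.cons_succ, Fin.succ_castSucc, Fin.snoc_castSucc] at this
  have hlast : a (Fin.last n) = 0 := by
    have := h' ((Fin.last n).succ)
    rwa [Fin.cons_succ, Fin.succ_last, Fin.snoc_last, add_zero] at this
  have hzero : b 0 = 0 := by
    have := h' ((0 : Fin (n + 1)).castSucc)
    rwa [Fin.snoc_castSucc, Fin.castSucc_zero, Fin.cons_zero, zero_add] at this
  refine ⟨fun i => a i.castSucc, ?_, ?_⟩
  · funext j
    refine Fin.lastCases ?_ (fun i => ?_) j
    · rw [Fin.snoc_last, hlast]
    · rw [Fin.snoc_castSucc]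
  · funext j
    refine Fin.cases ?_ (fun i => ?_) j
    · rw [Pi.neg_apply, Fin.cons_zero, neg_zero, hzero]
    · rw [Pi.neg_apply, Fin.cons_succ]
      exact eq_neg_of_add_eq_zero_right (hmix i)

lemma Ymul_injective (t : ℕ) : Function.Injective (Ymul K V t) := by
  rw [← LinearMap.ker_eq_bot, eq_bot_iff]
  intro x hx
  rw [LinearMap.mem_ker] at hx
  have hxe : x = eps K V t ((eps K V t).symm x) := ((eps K V t).apply_symm_apply x).symm
  rw [hxe, Ymul_eps] at hx
  have h0 : (Fin.snoc ((eps K V t).symm x) (0 : V) : Fin (t + 1 + 1) → V) = 0 := by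
    have := (eps K V (t + 1)).map_eq_zero_iff.mp hx
    exact this
  have hv : (eps K V t).symm x = 0 := by
    funext i
    have := congrFun h0 i.castSucc
    rwa [Fin.snoc_castSucc] at this
  rw [Submodule.mem_bot, hxe, hv, map_zero]

lemma XYmul_comm (t : ℕ) (x : V ⊗[K] PmT K 1 t) :
    Xmul K V (t + 1) (Ymul K V t x) = Ymul K V (t + 1) (Xmul K V t x) := by
  have hxe : x = eps K V t ((eps K V t).symm x) := ((eps K V t).apply_symm_apply x).symm
  rw [hxe, Ymul_eps, Xmul_eps, Xmul_eps, Ymul_eps]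
  congr 1
  exact Fin.cons_snoc_eq_snoc_cons _ _ _

lemma koszul_tensor (t : ℕ) (a b : V ⊗[K] PmT K 1 (t + 1))
    (h : Xmul K V (t + 1) a + Ymul K V (t + 1) b = 0) :
    ∃ w : V ⊗[K] PmT K 1 t, a = Ymul K V t w ∧ b = -(Xmul K V t w) := by
  set va := (eps K V (t + 1)).symm a with hva
  set vb := (eps K V (t + 1)).symm b with hvb
  have ha : a = eps K V (t + 1) va := ((eps K V (t + 1)).apply_symm_apply a).symm
  have hb : b = eps K V (t + 1) vb := ((eps K V (t + 1)).apply_symm_apply b).symm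
  rw [ha, hb, Xmul_eps, Ymul_eps, ← map_add] at h
  have hcoord : (Fin.cons (0 : V) va : Fin (t + 1 + 1 + 1) → V) +
      (Fin.snoc vb (0 : V) : Fin (t + 1 + 1 + 1) → V) = 0 :=
    (eps K V (t + 2)).map_eq_zero_iff.mp h
  obtain ⟨w, hw1, hw2⟩ := koszul_coord (V := V) va vb hcoord
  refine ⟨eps K V t w, ?_, ?_⟩
  · rw [ha, hw1, Ymul_eps]
  · rw [hb, hw2, map_neg, Xmul_eps]

lemma koszul_tensor_zero (a b : V ⊗[K] PmT K 1 0)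
    (h : Xmul K V 0 a + Ymul K V 0 b = 0) : a = 0 ∧ b = 0 := by
  set va := (eps K V 0).symm a with hva
  set vb := (eps K V 0).symm b with hvb
  have ha : a = eps K V 0 va := ((eps K V 0).apply_symm_apply a).symm
  have hb : b = eps K V 0 vb := ((eps K V 0).apply_symm_apply b).symm
  rw [ha, hb, Xmul_eps, Ymul_eps, ← map_add] at h
  have hcoord : (Fin.cons (0 : V) va : Fin 2 → V) +
      (Fin.snoc vb (0 : V) : Fin 2 → V) = 0 :=
    (eps K V 1).map_eq_zero_iff.mp h
  obtain ⟨w, hw1, hw2⟩ := koszul_coord (V := V) va vb hcoord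
  have hva0 : va = 0 := by
    funext j
    refine Fin.lastCases ?_ (fun i => i.elim0) j
    rw [hw1, Fin.snoc_last, Pi.zero_apply]
  have hvb0 : vb = 0 := by
    funext j
    refine Fin.cases ?_ (fun i => i.elim0) j
    rw [hw2, Pi.neg_apply, Fin.cons_zero, neg_zero, Pi.zero_apply]
  constructor
  · rw [ha, hva0, map_zero]
  · rw [hb, hvb0, map_zero]

/-! ### Decomposition of elements of `PmT K 1 1 ⊗ N` -/

variable {V}

noncomputable def prT (i : Fin 2) (N : Type) [AddCommGroup N] [Module K N] :
    PmT K 1 1 ⊗[K] N →ₗ[K] N :=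
  TensorProduct.lift ((LinearMap.lsmul K N).comp ((LinearMap.proj i).comp (monCoord K 1)))

lemma prT_tmul (i : Fin 2) (N : Type) [AddCommGroup N] [Module K N]
    (g : PmT K 1 1) (n : N) :
    prT K i N (g ⊗ₜ n) = monCoord K 1 g i • n := rfl

lemma mon_repr (t : ℕ) (g : PmT K 1 t) :
    ∑ i, monCoord K t g i • mon K t i = g := by
  rw [← monComb_apply, monComb_monCoord]

lemma prT_decomp (N : Type) [AddCommGroup N] [Module K N] (z : PmT K 1 1 ⊗[K] N) :
    z = XP K ⊗ₜ prT K 1 N z + YP K ⊗ₜ prT K 0 N z := by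
  induction z using TensorProduct.induction_on with
  | zero => simp
  | tmul g n =>
      rw [prT_tmul, prT_tmul]
      have hg : monCoord K 1 g 0 • YP K + monCoord K 1 g 1 • XP K = g := by
        have h2 := mon_repr K 1 g
        rw [Fin.sum_univ_two] at h2
        exact h2
      conv_lhs => rw [← hg]
      rw [TensorProduct.add_tmul, TensorProduct.tmul_smul, TensorProduct.tmul_smul,
        TensorProduct.smul_tmul', TensorProduct.smul_tmul']
      abel
  | add x y hx hy =>
      rw [map_add, map_add, TensorProduct.tmul_add, TensorProduct.tmul_add]
      conv_lhs => rw [hx, hy]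
      abel

lemma prT_XP (N : Type) [AddCommGroup N] [Module K N] (n : N) :
    prT K 1 N (XP K ⊗ₜ n) = n := by
  rw [prT_tmul, XP, monCoord_mon, if_pos rfl, one_smul]

lemma prT_YP_XP (N : Type) [AddCommGroup N] [Module K N] (n : N) :
    prT K 1 N (YP K ⊗ₜ n) = 0 := by
  rw [prT_tmul, YP, monCoord_mon, if_neg (by decide), zero_smul]

variable {K}

/-! ### Evaluation lemmas -/

lemma aeval_mon (Z : ZeroDimInProd K V 1) (t : ℕ) (i : Fin (t + 1)) :
    aeval Z.ξ (mon K t i).poly = Z.ξ 0 ^ i.1 * Z.ξ 1 ^ (t - i.1) := by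
  rw [mon_poly, show (monomial (dexp t i) (1 : K)) = X 0 ^ i.1 * X 1 ^ (t - i.1) by
    rw [X_pow_eq_monomial, X_pow_eq_monomial, monomial_mul, one_mul]; rfl]
  rw [map_mul, map_pow, map_pow, aeval_X, aeval_X]

lemma aeval_XP (Z : ZeroDimInProd K V 1) : aeval Z.ξ (XP K).poly = Z.ξ 0 := by
  rw [XP, aeval_mon]
  norm_num

lemma aeval_YP (Z : ZeroDimInProd K V 1) : aeval Z.ξ (YP K).poly = Z.ξ 1 := by
  rw [YP, aeval_mon]
  norm_num

lemma evMap_Xmul (Z : ZeroDimInProd K V 1) (t : ℕ) (z : V ⊗[K] PmT K 1 t) :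
    evMap Z (t + 1) (Xmul K V t z) = Z.ξ 0 * evMap Z t z := by
  have h := LinearMap.congr_fun (evMap_mul Z t (XP K)) z
  simpa [aeval_XP, Xmul] using h

lemma evMap_Ymul (Z : ZeroDimInProd K V 1) (t : ℕ) (z : V ⊗[K] PmT K 1 t) :
    evMap Z (t + 1) (Ymul K V t z) = Z.ξ 1 * evMap Z t z := by
  have h := LinearMap.congr_fun (evMap_mul Z t (YP K)) z
  simpa [aeval_YP, Ymul] using h

lemma range_xi (Z : ZeroDimInProd K V 1) : Set.range Z.ξ = {Z.ξ 0, Z.ξ 1} := by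
  ext x
  constructor
  · rintro ⟨i, rfl⟩
    fin_cases i
    · exact Or.inl rfl
    · exact Or.inr rfl
  · rintro (h | h)
    · exact ⟨0, h.symm⟩
    · exact ⟨1, h.symm⟩

lemma one_mem_span_xi (Z : ZeroDimInProd K V 1) :
    (1 : Z.A) ∈ Ideal.span {Z.ξ 0, Z.ξ 1} := by
  rw [← range_xi, Z.spanξ]
  trivial

lemma ann_xi (Z : ZeroDimInProd K V 1) (c : Z.A)
    (h0 : Z.ξ 0 * c = 0) (h1 : Z.ξ 1 * c = 0) : c = 0 := by
  obtain ⟨p, q, hpq⟩ := Ideal.mem_span_pair.mp (one_mem_span_xi Z)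
  calc c = (p * Z.ξ 0 + q * Z.ξ 1) * c := by rw [hpq, one_mul]
    _ = p * (Z.ξ 0 * c) + q * (Z.ξ 1 * c) := by ring
    _ = 0 := by rw [h0, h1, mul_zero, mul_zero, add_zero]

/-! ### The maps `X·`, `Y·` on `H^0(I_Z ⊗ R ⊠ (t))`, and the Koszul map `kappa` -/

noncomputable def XmulKer (Z : ZeroDimInProd K V 1) (t : ℕ) :
    H0IZ Z t →ₗ[K] H0IZ Z (t + 1) :=
  LinearMap.codRestrict (LinearMap.ker (evMap Z (t + 1)))
    ((Xmul K V t).comp (LinearMap.ker (evMap Z t)).subtype)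
    (fun x => by
      rw [LinearMap.mem_ker]
      show evMap Z (t + 1) (Xmul K V t x.1) = 0
      rw [evMap_Xmul, LinearMap.mem_ker.mp x.2, mul_zero])

noncomputable def YmulKer (Z : ZeroDimInProd K V 1) (t : ℕ) :
    H0IZ Z t →ₗ[K] H0IZ Z (t + 1) :=
  LinearMap.codRestrict (LinearMap.ker (evMap Z (t + 1)))
    ((Ymul K V t).comp (LinearMap.ker (evMap Z t)).subtype)
    (fun x => by
      rw [LinearMap.mem_ker]
      show evMap Z (t + 1) (Ymul K V t x.1) = 0
      rw [evMap_Ymul, LinearMap.mem_ker.mp x.2, mul_zero])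

lemma XmulKer_val (Z : ZeroDimInProd K V 1) (t : ℕ) (x : H0IZ Z t) :
    (XmulKer Z t x).1 = Xmul K V t x.1 := rfl

lemma YmulKer_val (Z : ZeroDimInProd K V 1) (t : ℕ) (x : H0IZ Z t) :
    (YmulKer Z t x).1 = Ymul K V t x.1 := rfl

noncomputable def kappa (Z : ZeroDimInProd K V 1) (t : ℕ) :
    H0IZ Z t →ₗ[K] PmT K 1 1 ⊗[K] H0IZ Z (t + 1) :=
  ((TensorProduct.mk K (PmT K 1 1) (H0IZ Z (t + 1)) (XP K)).comp (YmulKer Z t))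
    - ((TensorProduct.mk K (PmT K 1 1) (H0IZ Z (t + 1)) (YP K)).comp (XmulKer Z t))

lemma kappa_apply (Z : ZeroDimInProd K V 1) (t : ℕ) (w : H0IZ Z t) :
    kappa Z t w = XP K ⊗ₜ YmulKer Z t w - YP K ⊗ₜ XmulKer Z t w := rfl

lemma muMap_tmul (Z : ZeroDimInProd K V 1) (t : ℕ) (g : PmT K 1 1) (x : H0IZ Z t) :
    (muMap Z t (g ⊗ₜ x)).1 = LinearMap.lTensor V (polyMulBil K 1 t g) x.1 := rfl

lemma kappa_injective (Z : ZeroDimInProd K V 1) (t : ℕ) :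
    Function.Injective (kappa Z t) := by
  rw [← LinearMap.ker_eq_bot, eq_bot_iff]
  intro w hw
  rw [LinearMap.mem_ker] at hw
  have h1 : prT K 1 (H0IZ Z (t + 1)) (kappa Z t w) = 0 := by rw [hw, map_zero]
  rw [kappa_apply, map_sub, prT_XP, prT_YP_XP, sub_zero] at h1
  have h2 : Ymul K V t w.1 = 0 := by
    rw [← YmulKer_val, h1]
    rfl
  have h3 : w.1 = (0 : V ⊗[K] PmT K 1 t) := Ymul_injective K V t (by rw [h2, map_zero])
  rw [Submodule.mem_bot]
  exact Subtype.ext h3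

lemma kappa_range (Z : ZeroDimInProd K V 1) (t : ℕ) :
    LinearMap.range (kappa Z t) = LinearMap.ker (muMap Z (t + 1)) := by
  apply le_antisymm
  · rintro _ ⟨w, rfl⟩
    rw [LinearMap.mem_ker]
    apply Subtype.ext
    show (muMap Z (t + 1) (kappa Z t w)).1 = (0 : V ⊗[K] PmT K 1 (t + 1 + 1))
    rw [kappa_apply, map_sub]
    have hc : ((muMap Z (t + 1)) (XP K ⊗ₜ YmulKer Z t w) -
        (muMap Z (t + 1)) (YP K ⊗ₜ XmulKer Z t w)).1 =
        (muMap Z (t + 1) (XP K ⊗ₜ YmulKer Z t w)).1 -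
        (muMap Z (t + 1) (YP K ⊗ₜ XmulKer Z t w)).1 := rfl
    rw [hc, muMap_tmul, muMap_tmul, YmulKer_val, XmulKer_val]
    show Xmul K V (t + 1) (Ymul K V t w.1) - Ymul K V (t + 1) (Xmul K V t w.1) = 0
    rw [XYmul_comm, sub_self]
  · intro z hz
    have hdec := prT_decomp K (H0IZ Z (t + 1)) z
    set a := prT K 1 (H0IZ Z (t + 1)) z with hadef
    set b := prT K 0 (H0IZ Z (t + 1)) z with hbdef
    have hval : Xmul K V (t + 1) a.1 + Ymul K V (t + 1) b.1 = 0 := by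
      have h0 : (muMap Z (t + 1) z).1 = (0 : V ⊗[K] PmT K 1 (t + 1 + 1)) := by
        rw [LinearMap.mem_ker.mp hz]
        rfl
      rw [hdec] at h0
      have hc : ((muMap Z (t + 1)) (XP K ⊗ₜ a + YP K ⊗ₜ b)).1 =
          (muMap Z (t + 1) (XP K ⊗ₜ a)).1 + (muMap Z (t + 1) (YP K ⊗ₜ b)).1 := by
        rw [map_add]; rfl
      rw [hc, muMap_tmul, muMap_tmul] at h0
      exact h0
    obtain ⟨w, hw1, hw2⟩ := koszul_tensor K V t a.1 b.1 hval
    have hwker : w ∈ LinearMap.ker (evMap Z t) := by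
      rw [LinearMap.mem_ker]
      apply ann_xi Z
      · have : evMap Z (t + 1) (Xmul K V t w) = 0 := by
          have hb2 : Xmul K V t w = -b.1 := by rw [hw2, neg_neg]
          rw [hb2, map_neg, LinearMap.mem_ker.mp b.2, neg_zero]
        rwa [evMap_Xmul] at this
      · have : evMap Z (t + 1) (Ymul K V t w) = 0 := by
          rw [← hw1, LinearMap.mem_ker.mp a.2]
        rwa [evMap_Ymul] at this
    refine ⟨⟨w, hwker⟩, ?_⟩
    erw [kappa_apply]
    have ha : YmulKer Z t ⟨w, hwker⟩ = a := Subtype.ext (by rw [hw1]; rfl)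
    have hb : XmulKer Z t ⟨w, hwker⟩ = -b := Subtype.ext (by
      show Xmul K V t w = (-b : H0IZ Z (t+1)).1
      have : (-b : H0IZ Z (t+1)).1 = -b.1 := rfl
      rw [this, hw2, neg_neg])
    rw [ha, hb, hdec]
    rw [TensorProduct.tmul_neg, sub_neg_eq_add]

lemma muMap_ker_zero (Z : ZeroDimInProd K V 1) :
    LinearMap.ker (muMap Z 0) = ⊥ := by
  rw [eq_bot_iff]
  intro z hz
  rw [LinearMap.mem_ker] at hz
  have hdec := prT_decomp K (H0IZ Z 0) z
  set a := prT K 1 (H0IZ Z 0) z with hadef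
  set b := prT K 0 (H0IZ Z 0) z with hbdef
  have hval : Xmul K V 0 a.1 + Ymul K V 0 b.1 = 0 := by
    have h0 : (muMap Z 0 z).1 = (0 : V ⊗[K] PmT K 1 1) := by rw [hz]; rfl
    rw [hdec] at h0
    have hc : ((muMap Z 0) (XP K ⊗ₜ a + YP K ⊗ₜ b)).1 =
        (muMap Z 0 (XP K ⊗ₜ a)).1 + (muMap Z 0 (YP K ⊗ₜ b)).1 := by
      rw [map_add]; rfl
    rw [hc, muMap_tmul, muMap_tmul] at h0
    exact h0
  obtain ⟨ha0, hb0⟩ := koszul_tensor_zero K V a.1 b.1 hval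
  rw [Submodule.mem_bot, hdec]
  have ha : a = 0 := Subtype.ext ha0
  have hb : b = 0 := Subtype.ext hb0
  rw [ha, hb, TensorProduct.tmul_zero, TensorProduct.tmul_zero, add_zero]

/-! ### Dimension counting -/

section Dim

variable [FiniteDimensional K V]

noncomputable instance (Z : ZeroDimInProd K V 1) (t : ℕ) :
    FiniteDimensional K (H0IZ Z t) :=
  inferInstanceAs (FiniteDimensional K ↥(LinearMap.ker (evMap Z t)))

lemma rank_nullity_ev (Z : ZeroDimInProd K V 1) (t : ℕ) :
    finrank K (H0IZ Z t) + finrank K ↥(LinearMap.range (evMap Z t)) =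
      finrank K V * (t + 1) := by
  have h := LinearMap.finrank_range_add_finrank_ker (evMap Z t)
  rw [Module.finrank_tensorProduct, finrank_PmT] at h
  have hk : finrank K (H0IZ Z t) = finrank K ↥(LinearMap.ker (evMap Z t)) := rfl
  omega

lemma range_ev_top_of_h1_zero (Z : ZeroDimInProd K V 1) (t : ℕ) (h : h1ZP Z t = 0) :
    LinearMap.range (evMap Z t) = ⊤ := by
  have hle : finrank K ↥(LinearMap.range (evMap Z t)) ≤ finrank K Z.A :=
    Submodule.finrank_le _
  rw [h1ZP] at h
  exact Submodule.eq_top_of_finrank_eq (le_antisymm hle (by omega))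

end Dim

lemma range_ev_succ_top (Z : ZeroDimInProd K V 1) (t : ℕ)
    (h : LinearMap.range (evMap Z t) = ⊤) :
    LinearMap.range (evMap Z (t + 1)) = ⊤ := by
  rw [eq_top_iff]
  rintro c -
  obtain ⟨p, q, hpq⟩ := Ideal.mem_span_pair.mp (show c ∈ Ideal.span {Z.ξ 0, Z.ξ 1} by
    rw [← range_xi, Z.spanξ]; trivial)
  obtain ⟨zp, hzp⟩ : ∃ z, evMap Z t z = p := by
    have hp : p ∈ LinearMap.range (evMap Z t) := by rw [h]; trivial
    exact hp
  obtain ⟨zq, hzq⟩ : ∃ z, evMap Z t z = q := by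
    have hq : q ∈ LinearMap.range (evMap Z t) := by rw [h]; trivial
    exact hq
  exact ⟨Xmul K V t zp + Ymul K V t zq, by
    rw [map_add, evMap_Xmul, evMap_Ymul, hzp, hzq, ← hpq]; ring⟩

lemma finrank_ker_mu_succ [FiniteDimensional K V] (Z : ZeroDimInProd K V 1) (t : ℕ) :
    finrank K ↥(LinearMap.ker (muMap Z (t + 1))) = finrank K (H0IZ Z t) := by
  rw [← kappa_range]
  exact LinearMap.finrank_range_of_inj (kappa_injective Z t)

/-- Proposition `bg1`(3)-(4).
With `Y`, `R`, `X = Y × ℙ^1`, `Z` and `e` as in Statement 4, the cokernel of the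
multiplication map `μ_e` has dimension `h^1(X, 𝓘_Z ⊗ R ⊠ (e-1))`; in particular if
`e = 0` then `dim coker(μ_0) = deg Z` (`= dim_K H^0(Z, O_Z)`). -/

theorem statement5 (K : Type) [Field K] [IsAlgClosed K] [CharZero K]
    (V : Type) [AddCommGroup V] [Module K V] [FiniteDimensional K V]
    (Z : ZeroDimInProd K V 1)
    (hz : ∃ z : ℕ, h1ZP Z z = 0) :
    (0 < Nat.find hz →
      finrank K (H0IZ Z (Nat.find hz + 1) ⧸ LinearMap.range (muMap Z (Nat.find hz))) =
        h1ZP Z (Nat.find hz - 1)) ∧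
    (Nat.find hz = 0 →
      finrank K (H0IZ Z (Nat.find hz + 1) ⧸ LinearMap.range (muMap Z (Nat.find hz))) =
        finrank K Z.A) := by
  have hspec : h1ZP Z (Nat.find hz) = 0 := Nat.find_spec hz
  constructor
  · intro hpos
    obtain ⟨n, hn⟩ : ∃ n, Nat.find hz = n + 1 := ⟨Nat.find hz - 1, by omega⟩
    rw [hn] at hspec ⊢
    have h1 : LinearMap.range (evMap Z (n + 1)) = ⊤ := range_ev_top_of_h1_zero Z _ hspec
    have h2 : LinearMap.range (evMap Z (n + 1 + 1)) = ⊤ := range_ev_succ_top Z _ h1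
    have e1 := rank_nullity_ev Z n
    have e2 := rank_nullity_ev Z (n + 1)
    have e3 := rank_nullity_ev Z (n + 1 + 1)
    have e4 : finrank K ↥(LinearMap.range (evMap Z (n + 1))) = finrank K Z.A := by
      rw [h1]; exact finrank_top K _
    have e5 : finrank K ↥(LinearMap.range (evMap Z (n + 1 + 1))) = finrank K Z.A := by
      rw [h2]; exact finrank_top K _
    have e6 : finrank K ↥(LinearMap.range (evMap Z n)) ≤ finrank K Z.A :=
      Submodule.finrank_le _
    have e7 := LinearMap.finrank_range_add_finrank_ker (muMap Z (n + 1))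
    rw [Module.finrank_tensorProduct, finrank_PmT] at e7
    have e8 := finrank_ker_mu_succ Z n
    have e9 := Submodule.finrank_quotient_add_finrank
      (LinearMap.range (muMap Z (n + 1)))
    have ering : finrank K V * (n + 1 + 1 + 1) + finrank K V * (n + 1) =
        2 * (finrank K V * (n + 1 + 1)) := by ring
    show finrank K (H0IZ Z (n + 1 + 1) ⧸ LinearMap.range (muMap Z (n + 1))) = h1ZP Z n
    rw [h1ZP]
    omega
  · intro h0
    rw [h0] at hspec ⊢
    have h1 : LinearMap.range (evMap Z 0) = ⊤ := range_ev_top_of_h1_zero Z 0 hspec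
    have h2 : LinearMap.range (evMap Z (0 + 1)) = ⊤ := range_ev_succ_top Z 0 h1
    have e1 := rank_nullity_ev Z 0
    have e2 := rank_nullity_ev Z (0 + 1)
    have e4 : finrank K ↥(LinearMap.range (evMap Z (0 + 1))) = finrank K Z.A := by
      rw [h2]; exact finrank_top K _
    have e5 : finrank K ↥(LinearMap.range (evMap Z 0)) = finrank K Z.A := by
      rw [h1]; exact finrank_top K _
    have e7 := LinearMap.finrank_range_add_finrank_ker (muMap Z 0)
    rw [Module.finrank_tensorProduct, finrank_PmT] at e7
    have e8 : finrank K ↥(LinearMap.ker (muMap Z 0)) = 0 := by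
      rw [muMap_ker_zero]; exact finrank_bot K _
    have e9 := Submodule.finrank_quotient_add_finrank (LinearMap.range (muMap Z 0))
    have ering : 2 * (finrank K V * (0 + 1)) = finrank K V * (0 + 1 + 1) := by ring
    omega

end MultiProjPaper
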